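/- If T is a locally finite tree with finitely many leaves such that T is isomorphic to T - x for some leaf x, then T is isomorphic to a one-way infinite path (a ray). -/

import Mathlib

open SimpleGraph Set

/-- A leaf of a graph: a vertex with exactly one neighbor (degree 1). -/
def IsLeaf {V : Type*} (G : SimpleGraph V) (x : V) : Prop :=
  (G.neighborSet x).encard = 1

/-- `v` is in the core `c(T)`: deleting `v` leaves at least two infinite components. -/
def InCore {V : Type*} (G : SimpleGraph V) (v : V) : Prop :=
  ∃ C D : (G.induce {u | u ≠ v}).ConnectedComponent,
    C ≠ D ∧ C.supp.Infinite ∧ D.supp.Infinite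

/-- The one-way infinite path (ray) on ℕ. -/
def rayGraph : SimpleGraph ℕ := SimpleGraph.fromRel (fun m n => n = m + 1)


section helpers
variable {V : Type*} {G : SimpleGraph V} {x y u v : V}

lemma IsLeaf.exists_nbr (hx : IsLeaf G x) : ∃ y, G.neighborSet x = {y} :=
  Set.encard_eq_one.mp hx

lemma nbr_eq (hy : G.neighborSet x = {y}) (h : G.Adj x u) : u = y := by
  have : u ∈ G.neighborSet x := h
  rw [hy] at this; exact this

lemma exists_geodesic_avoid (hc : G.Connected) (hx : IsLeaf G x)
    (hu : u ≠ x) (hv : v ≠ x) :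
    ∃ p : G.Walk u v, p.length = G.dist u v ∧ x ∉ p.support := by
  classical
  obtain ⟨p, hp, hl⟩ := hc.exists_path_of_dist u v
  refine ⟨p, hl, fun hmem => ?_⟩
  obtain ⟨y, hy⟩ := hx.exists_nbr
  have hspec := p.take_spec hmem
  set q := p.takeUntil x hmem with hq
  set r := p.dropUntil x hmem with hr
  -- q : Walk u x, r : Walk x v
  obtain ⟨a, ha, q', hq'⟩ := (q.reverse).exists_eq_cons_of_ne (Ne.symm hu)
  obtain ⟨b, hb, r', hr'⟩ := r.exists_eq_cons_of_ne (fun h => hv h.symm)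
  have hay : a = y := nbr_eq hy ha
  have hby : b = y := nbr_eq hy hb
  have haq : a ∈ q.support := by
    have : a ∈ q.reverse.support := by rw [hq']; simp
    rwa [Walk.support_reverse, List.mem_reverse] at this
  have hbr : b ∈ r.support.tail := by
    rw [hr']; simp [Walk.support_cons]
  have hnodup : (q.support ++ r.support.tail).Nodup := by
    have := hp.support_nodup
    rwa [← hspec, Walk.support_append] at this
  have hdisj := (List.nodup_append'.mp hnodup).2.2
  exact hdisj haq (hay ▸ hby ▸ hbr)

end helpers
section helpers2
variable {V : Type*} {G : SimpleGraph V} {x u v : V}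

lemma exists_induce_walk {s : Set V} (p : G.Walk u v)
    (hp : ∀ w ∈ p.support, w ∈ s) :
    ∃ q : (G.induce s).Walk ⟨u, hp u p.start_mem_support⟩ ⟨v, hp v p.end_mem_support⟩,
      q.length = p.length := by
  induction p with
  | nil => exact ⟨.nil, rfl⟩
  | @cons a b c h p ih =>
    have hb : ∀ w ∈ p.support, w ∈ s := fun w hw => hp w (by simp [hw])
    obtain ⟨q, hq⟩ := ih hb
    exact ⟨.cons (by exact h) q, congrArg (· + 1) hq⟩

lemma induce_dist (hc : G.Connected) (hx : IsLeaf G x) (hu : u ≠ x) (hv : v ≠ x) :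
    (G.induce {v | v ≠ x}).dist ⟨u, hu⟩ ⟨v, hv⟩ = G.dist u v := by
  obtain ⟨p, hl, hsup⟩ := exists_geodesic_avoid hc hx hu hv
  obtain ⟨q, hq⟩ := exists_induce_walk (s := {v | v ≠ x}) p
    (fun w hw => fun hwx => hsup (hwx ▸ hw))
  have h1 : (G.induce {v | v ≠ x}).dist ⟨u, hu⟩ ⟨v, hv⟩ ≤ G.dist u v := by
    rw [← hl, ← hq]; exact dist_le q
  have hreach : (G.induce {v | v ≠ x}).Reachable ⟨u, hu⟩ ⟨v, hv⟩ := ⟨q⟩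
  obtain ⟨r, hr⟩ := hreach.exists_walk_length_eq_dist
  have h2 : G.dist u v ≤ (G.induce {v | v ≠ x}).dist ⟨u, hu⟩ ⟨v, hv⟩ := by
    rw [← hr]
    have := dist_le (r.map (SimpleGraph.Embedding.induce {v | v ≠ x}).toHom)
    rw [Walk.length_map] at this; exact this
  exact le_antisymm h1 h2

end helpers2
section helpers3
variable {V W : Type*} {G : SimpleGraph V} {H : SimpleGraph W} {x y u v : V}

lemma iso_dist_le (e : G ≃g H) (u v : V) : H.dist (e u) (e v) ≤ G.dist u v := by
  by_cases hr : G.Reachable u v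
  · obtain ⟨p, hp⟩ := hr.exists_walk_length_eq_dist
    have := dist_le (p.map e.toHom)
    simpa [hp] using this
  · have hr' : ¬ H.Reachable (e u) (e v) := fun h => hr (h.elim
      (fun p => ⟨(p.map e.symm.toHom).copy (by simp) (by simp)⟩))
    rw [dist_eq_zero_of_not_reachable hr, dist_eq_zero_of_not_reachable hr']

lemma iso_dist (e : G ≃g H) (u v : V) : H.dist (e u) (e v) = G.dist u v :=
  le_antisymm (iso_dist_le e u v)
    (by simpa using iso_dist_le e.symm (e u) (e v))

lemma iso_isLeaf (e : G ≃g H) (v : V) (hv : IsLeaf G v) : IsLeaf H (e v) := by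
  unfold IsLeaf at *
  rw [← Set.encard_congr (e.mapNeighborSet v)]
  exact hv

lemma dist_succ_of_leaf (hc : G.Connected) (hy : G.neighborSet x = {y}) (hv : v ≠ x) :
    G.dist x v = G.dist y v + 1 := by
  have hxy : G.Adj x y := by
    have : y ∈ G.neighborSet x := by rw [hy]; rfl
    exact this
  obtain ⟨p, hp⟩ := hc.exists_walk_length_eq_dist x v
  obtain ⟨a, ha, q, hq⟩ := p.exists_eq_cons_of_ne (Ne.symm hv)
  have hay : a = y := nbr_eq hy ha
  have h1 : G.dist y v ≤ q.length := by rw [← hay]; exact dist_le q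
  have h2 : p.length = q.length + 1 := by rw [hq]; simp
  have h3 : G.dist x v ≤ G.dist y v + 1 := by
    obtain ⟨r, hr⟩ := hc.exists_walk_length_eq_dist y v
    have := dist_le (Walk.cons hxy r)
    simpa [hr] using this
  omega
end helpers3
section helpers4
variable {V : Type*} {G : SimpleGraph V} {x y : V}

lemma induce_nbr_encard (u : {v : V | v ≠ x}) :
    ((G.induce {v | v ≠ x}).neighborSet u).encard = (G.neighborSet u.1 \ {x}).encard := by
  apply Set.encard_congr
  refine ⟨fun w => ⟨w.1.1, w.2, w.1.2⟩, fun w => ⟨⟨w.1, w.2.2⟩, w.2.1⟩, fun w => rfl, fun w => rfl⟩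

lemma isLeaf_induce_iff (u : {v : V | v ≠ x}) :
    IsLeaf (G.induce {v | v ≠ x}) u ↔ (G.neighborSet u.1 \ {x}).encard = 1 := by
  unfold IsLeaf; rw [induce_nbr_encard]

lemma leaf_of_induce_leaf (hy : G.neighborSet x = {y}) (u : {v : V | v ≠ x})
    (hu : IsLeaf (G.induce {v | v ≠ x}) u) : IsLeaf G u.1 ∨ u.1 = y := by
  rw [isLeaf_induce_iff] at hu
  by_cases hxn : x ∈ G.neighborSet u.1
  · right
    exact nbr_eq hy ((G.mem_neighborSet _ _).mp hxn).symm
  · left; unfold IsLeaf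
    rwa [Set.diff_singleton_eq_self hxn] at hu

lemma induce_leaf_of_leaf (u : {v : V | v ≠ x}) (hu : IsLeaf G u.1)
    (hne : G.neighborSet u.1 ≠ {x}) : IsLeaf (G.induce {v | v ≠ x}) u := by
  rw [isLeaf_induce_iff]
  obtain ⟨z, hz⟩ := hu.exists_nbr
  have hzx : z ≠ x := fun h => hne (h ▸ hz)
  rw [hz, Set.diff_singleton_eq_self (by simpa using Ne.symm hzx), Set.encard_singleton]

lemma two_vertices_of_deg (hc : G.Connected) (hx : IsLeaf G x)
    (hy : G.neighborSet x = {y}) (hdeg : G.neighborSet y = {x}) (v : V) :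
    v = x ∨ v = y := by
  classical
  by_contra hcon
  push_neg at hcon
  obtain ⟨hvx, hvy⟩ := hcon
  have hyx : y ≠ x := by
    intro h
    have : G.Adj x y := by rw [← G.mem_neighborSet, hy]; rfl
    exact G.irrefl (h ▸ this)
  obtain ⟨p, _, hsup⟩ := exists_geodesic_avoid hc hx hvx hyx
  obtain ⟨a, ha, q, hq⟩ := p.reverse.exists_eq_cons_of_ne (Ne.symm hvy)
  have hax : a = x := nbr_eq hdeg ha
  apply hsup
  rw [← hax]
  have : a ∈ p.reverse.support := by rw [hq]; simp
  rwa [Walk.support_reverse, List.mem_reverse] at this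

end helpers4
section helpers5
variable {V : Type*} {G : SimpleGraph V} {x y : V}

lemma T_insert [DecidableEq V] {A : Finset V} {v : V} (hv : v ∉ A) (d : V → V → ℕ)
    (hsymm : ∀ a b, d a b = d b a) (hdiag : d v v = 0) :
    ∑ a ∈ insert v A, ∑ b ∈ insert v A, d a b
      = (∑ b ∈ A, d v b) + (∑ b ∈ A, d v b) + ∑ a ∈ A, ∑ b ∈ A, d a b := by
  rw [Finset.sum_insert hv, Finset.sum_insert hv, hdiag]
  have h1 : ∑ a ∈ A, ∑ b ∈ insert v A, d a b
      = (∑ a ∈ A, d a v) + ∑ a ∈ A, ∑ b ∈ A, d a b := by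
    rw [← Finset.sum_add_distrib]
    exact Finset.sum_congr rfl (fun a _ => Finset.sum_insert hv)
  have h2 : ∑ a ∈ A, d a v = ∑ a ∈ A, d v a :=
    Finset.sum_congr rfl (fun a _ => hsymm a v)
  rw [h1, h2]
  omega

lemma leaves_eq_singleton (hc : G.Connected) (hx : IsLeaf G x)
    (hy : G.neighborSet x = {y}) (hfin : {v | IsLeaf G v}.Finite)
    (e : G ≃g G.induce {v | v ≠ x}) : {v | IsLeaf G v} = {x} := by
  classical
  set L : Set V := {v | IsLeaf G v} with hL
  have hxL : x ∈ L := hx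
  have hadjxy : G.Adj x y := by rw [← G.mem_neighborSet, hy]; rfl
  have hyx : y ≠ x := fun h => G.irrefl (h ▸ hadjxy)
  set F : V → V := fun v => ((e v : {v // v ≠ x}) : V) with hF
  have hFne : ∀ v, F v ≠ x := fun v => (e v).2
  have hFinj : Function.Injective F :=
    fun a b h => e.toEquiv.injective (Subtype.ext h)
  -- the degenerate case N(y) = {x}
  by_cases hNy : G.neighborSet y = {x}
  · exfalso
    have h2 := two_vertices_of_deg hc hx hy hNy
    have hex : F x = y := by
      rcases h2 (F x) with h | h
      · exact absurd h (hFne x)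
      · exact h
    have hey : F y = y := by
      rcases h2 (F y) with h | h
      · exact absurd h (hFne y)
      · exact h
    exact hyx (hFinj (hex.trans hey.symm)).symm
  -- main case
  have hLmap : ∀ v ∈ L, IsLeaf G (F v) ∨ F v = y :=
    fun v hv => leaf_of_induce_leaf hy (e v) (iso_isLeaf e v hv)
  have hImg1 : F '' L ⊆ insert y (L \ {x}) := by
    rintro _ ⟨v, hv, rfl⟩
    rcases hLmap v hv with h | h
    · exact Set.mem_insert_of_mem _ ⟨h, hFne v⟩
    · rw [h]; exact Set.mem_insert _ _
  have hImg2 : L \ {x} ⊆ F '' L := by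
    rintro u ⟨hu, hux⟩
    have hux' : u ≠ x := hux
    have hNux : G.neighborSet u ≠ {x} := by
      intro hcon
      have : G.Adj u x := by rw [← G.mem_neighborSet, hcon]; rfl
      have huy : u = y := nbr_eq hy this.symm
      rw [huy] at hcon
      exact hNy hcon
    have hlf' : IsLeaf (G.induce {v | v ≠ x}) ⟨u, hux'⟩ :=
      induce_leaf_of_leaf ⟨u, hux'⟩ hu hNux
    refine ⟨e.symm ⟨u, hux'⟩, ?_, ?_⟩
    · have := iso_isLeaf e.symm ⟨u, hux'⟩ hlf'
      exact this
    · show ((e (e.symm ⟨u, hux'⟩) : {v // v ≠ x}) : V) = u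
      rw [RelIso.apply_symm_apply]
  have hLx_fin : (L \ {x}).Finite := hfin.diff
  have hne : L.Nonempty := ⟨x, hxL⟩
  have hn1 : 1 ≤ L.ncard := (Set.ncard_pos hfin).mpr hne
  have hdiffcard : (L \ {x}).ncard = L.ncard - 1 :=
    Set.ncard_diff_singleton_of_mem hxL
  have himgcard : (F '' L).ncard = L.ncard := Set.ncard_image_of_injective L hFinj
  have hyL : y ∉ L := by
    intro hyL
    have hsub : F '' L ⊆ L \ {x} := by
      intro u hu
      have := hImg1 hu
      rcases Set.mem_insert_iff.mp this with h | h
      · exact h ▸ ⟨hyL, hyx⟩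
      · exact h
    have := Set.ncard_le_ncard hsub hLx_fin
    omega
  have hyLx : y ∉ L \ {x} := fun h => hyL h.1
  have hImg : F '' L = insert y (L \ {x}) := by
    apply Set.eq_of_subset_of_ncard_le hImg1 ?_ (hLx_fin.insert y)
    rw [Set.ncard_insert_of_notMem hyLx hLx_fin]
    omega
  -- sums of distances
  set A : Finset V := hLx_fin.toFinset with hA
  have hmemA : ∀ b, b ∈ A ↔ (b ∈ L ∧ b ≠ x) := by
    intro b; rw [hA, Set.Finite.mem_toFinset]; exact Iff.rfl
  have hxA : x ∉ A := fun h => ((hmemA x).mp h).2 rfl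
  have hyA : y ∉ A := fun h => hyL ((hmemA y).mp h).1
  set Lfin : Finset V := hfin.toFinset with hLfin
  have hLfin_eq : Lfin = insert x A := by
    apply Finset.coe_injective
    rw [Finset.coe_insert]
    rw [hLfin, Set.Finite.coe_toFinset, hA, Set.Finite.coe_toFinset]
    rw [Set.insert_diff_singleton, Set.insert_eq_self.mpr hxL]
  have hLfin_img : Lfin.image F = insert y A := by
    apply Finset.coe_injective
    rw [Finset.coe_image, Finset.coe_insert]
    rw [hLfin, Set.Finite.coe_toFinset, hA, Set.Finite.coe_toFinset, hImg]
  have hdF : ∀ a b : V, G.dist (F a) (F b) = G.dist a b := by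
    intro a b
    have h1 : (G.induce {v | v ≠ x}).dist ⟨F a, hFne a⟩ ⟨F b, hFne b⟩ = G.dist (F a) (F b) :=
      induce_dist hc hx (hFne a) (hFne b)
    have h2 : (G.induce {v | v ≠ x}).dist (e a) (e b) = G.dist a b := iso_dist e a b
    rw [← h1, ← h2]
  have hinj' : ∀ a ∈ Lfin, ∀ b ∈ Lfin, F a = F b → a = b := fun a _ b _ h => hFinj h
  have hS : ∑ a ∈ Lfin, ∑ b ∈ Lfin, G.dist a b
      = ∑ a ∈ Lfin.image F, ∑ b ∈ Lfin.image F, G.dist a b := by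
    rw [Finset.sum_image hinj']
    refine Finset.sum_congr rfl (fun a _ => ?_)
    rw [Finset.sum_image hinj']
    exact (Finset.sum_congr rfl (fun b _ => (hdF a b))).symm
  rw [hLfin_img, hLfin_eq] at hS
  rw [T_insert hxA _ (fun a b => G.dist_comm) (G.dist_self),
      T_insert hyA _ (fun a b => G.dist_comm) (G.dist_self)] at hS
  have hsx : ∑ b ∈ A, G.dist x b = (∑ b ∈ A, G.dist y b) + A.card := by
    have hstep : ∀ b ∈ A, G.dist x b = G.dist y b + 1 := fun b hb =>
      dist_succ_of_leaf hc hy ((hmemA b).mp hb).2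
    rw [Finset.sum_congr rfl hstep, Finset.sum_add_distrib, Finset.sum_const, smul_eq_mul,
      mul_one]
  have hcard0 : A.card = 0 := by omega
  have hAempty : L \ {x} = ∅ := by
    have := Finset.card_eq_zero.mp hcard0
    rwa [hA, Set.Finite.toFinset_eq_empty] at this
  exact Set.Subset.antisymm (Set.diff_eq_empty.mp hAempty) (Set.singleton_subset_iff.mpr hxL)

end helpers5

section helpers6
variable {V : Type*} {G : SimpleGraph V} {x y : V}

lemma ray_iso (hc : G.Connected) (hx : IsLeaf G x) (hy : G.neighborSet x = {y})
    (huniq : {v | IsLeaf G v} = {x}) (e : G ≃g G.induce {v | v ≠ x}) :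
    Nonempty (G ≃g rayGraph) := by
  classical
  set F : V → V := fun v => ((e v : {v // v ≠ x}) : V) with hF
  have hFne : ∀ v, F v ≠ x := fun v => (e v).2
  have hFinj : Function.Injective F :=
    fun a b h => e.toEquiv.injective (Subtype.ext h)
  have hadjxy : G.Adj x y := by rw [← G.mem_neighborSet, hy]; rfl
  have hFadj : ∀ a b, G.Adj a b → G.Adj (F a) (F b) := by
    intro a b hab
    exact e.map_adj_iff.mpr hab
  have hFx : F x = y := by
    rcases leaf_of_induce_leaf hy (e x) (iso_isLeaf e x hx) with h | h
    · exfalso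
      have : F x ∈ {v | IsLeaf G v} := h
      rw [huniq] at this
      exact hFne x this
    · exact h
  have hnbr : ∀ u, G.neighborSet (F u) \ {x} = F '' G.neighborSet u := by
    intro u
    ext w
    constructor
    · rintro ⟨hw, hwx⟩
      have hwx' : w ≠ x := hwx
      set z := e.symm ⟨w, hwx'⟩ with hz
      have hez : e z = ⟨w, hwx'⟩ := e.apply_symm_apply _
      have hadj : (G.induce {v | v ≠ x}).Adj (e u) (e z) := by
        rw [hez]
        exact hw
      refine ⟨z, e.map_adj_iff.mp hadj, ?_⟩
      show ((e z : {v // v ≠ x}) : V) = w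
      rw [hez]
    · rintro ⟨z, hz, rfl⟩
      refine ⟨?_, hFne z⟩
      exact e.map_adj_iff.mpr hz
  set X : ℕ → V := fun n => F^[n] x with hX
  have hX0 : X 0 = x := rfl
  have hXs : ∀ n, X (n + 1) = F (X n) := fun n => Function.iterate_succ_apply' F n x
  have hadjX : ∀ n, G.Adj (X n) (X (n + 1)) := by
    intro n
    induction n with
    | zero => rw [hX0, hXs, hX0, hFx]; exact hadjxy
    | succ k ih => rw [hXs, hXs (k+1)]; exact hFadj _ _ ih
  have hXinj : Function.Injective X := by
    have key : ∀ m n, X m = X n → m = n := by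
      intro m
      induction m with
      | zero =>
        intro n h
        cases n with
        | zero => rfl
        | succ k => exact absurd h.symm (by rw [hXs, hX0]; exact hFne _)
      | succ k ih =>
        intro n h
        cases n with
        | zero => exact absurd h (by rw [hXs, hX0]; exact hFne _)
        | succ l =>
          rw [hXs, hXs] at h
          rw [ih l (hFinj h)]
    exact fun m n h => key m n h
  have hNx : G.neighborSet x = {X 1} := by rw [hXs, hX0, hFx]; exact hy
  have hNX : ∀ n, G.neighborSet (X (n + 1)) = {X n, X (n + 2)} := by
    intro n
    induction n with
    | zero =>
      show G.neighborSet (X 1) = {X 0, X 2}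
      have e1 : F x = X 1 := by rw [← hX0, ← hXs 0]
      have h1 : G.neighborSet (X 1) \ {x} = {X 2} := by
        have h := hnbr x
        rw [hNx, Set.image_singleton] at h
        have e2 : F (X 1) = X 2 := (hXs 1).symm
        rw [e1, e2] at h
        exact h
      have hxmem : x ∈ G.neighborSet (X 1) := by
        rw [← e1, hFx]
        exact hadjxy.symm
      have h2 := Set.insert_diff_singleton (a := x) (s := G.neighborSet (X 1))
      rw [Set.insert_eq_self.mpr hxmem] at h2
      rw [← h2, h1, hX0]
    | succ k ih =>
      show G.neighborSet (X (k + 2)) = {X (k + 1), X (k + 3)}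
      have h1 : G.neighborSet (X (k + 2)) \ {x} = F '' G.neighborSet (X (k + 1)) := by
        rw [hXs (k + 1)]
        exact hnbr _
      rw [ih, Set.image_insert_eq, Set.image_singleton, ← hXs, ← hXs] at h1
      have hxnot : x ∉ G.neighborSet (X (k + 2)) := by
        intro hmem
        have hm2 : X (k + 2) ∈ G.neighborSet x := hmem.symm
        rw [hNx] at hm2
        have hm3 : X (k + 2) = X 1 := hm2
        have := hXinj hm3
        omega
      rw [Set.diff_singleton_eq_self hxnot] at h1
      exact h1
  have hdistle : ∀ n, G.dist x (X n) ≤ n := by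
    intro n
    induction n with
    | zero => rw [hX0]; simp [SimpleGraph.dist_self]
    | succ k ih =>
      have h1 : G.dist x (X (k + 1)) ≤ G.dist x (X k) + G.dist (X k) (X (k + 1)) :=
        hc.dist_triangle
      have h2 : G.dist (X k) (X (k + 1)) = 1 := dist_eq_one_iff_adj.mpr (hadjX k)
      omega
  have key : ∀ n v, G.dist x v = n → v = X n := by
    intro n
    induction n with
    | zero =>
      intro v h
      have hx0 := hc.dist_eq_zero_iff.mp h
      rw [← hx0, hX0]
    | succ k ih =>
      intro v h
      have hxv : x ≠ v := by
        rintro rfl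
        simp [SimpleGraph.dist_self] at h
      obtain ⟨p, hp⟩ := hc.exists_walk_length_eq_dist x v
      obtain ⟨a, ha, q, hq⟩ := p.reverse.exists_eq_cons_of_ne (Ne.symm hxv)
      have hlen : q.length = k := by
        have h2 := congrArg Walk.length hq
        rw [Walk.length_reverse] at h2
        simp only [Walk.length_cons] at h2
        omega
      have hda : G.dist x a = k := by
        have hle : G.dist x a ≤ k := by
          have hq' := SimpleGraph.dist_le q
          rw [SimpleGraph.dist_comm] at hq'
          omega
        have htr : G.dist x v ≤ G.dist x a + G.dist a v := hc.dist_triangle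
        have h2 : G.dist a v = 1 := dist_eq_one_iff_adj.mpr ha.symm
        omega
      have hax : a = X k := ih a hda
      have hv_mem : v ∈ G.neighborSet (X k) := by
        rw [← hax]
        exact ha.symm
      cases k with
      | zero =>
        rw [hX0, hNx] at hv_mem
        exact hv_mem
      | succ m =>
        rw [hNX m] at hv_mem
        rcases Set.mem_insert_iff.mp hv_mem with h1 | h1
        · exfalso
          have hd := hdistle m
          rw [← h1] at hd
          omega
        · exact h1
  have hXsurj : Function.Surjective X := fun v => ⟨G.dist x v, (key _ v rfl).symm⟩
  have hadj_iff : ∀ m n, G.Adj (X m) (X n) ↔ (m ≠ n ∧ (n = m + 1 ∨ m = n + 1)) := by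
    intro m n
    constructor
    · intro hadj
      have hmn : m ≠ n := fun hh => G.irrefl (hh ▸ hadj)
      refine ⟨hmn, ?_⟩
      cases m with
      | zero =>
        have hmem : X n ∈ G.neighborSet x := by rw [← hX0]; exact hadj
        rw [hNx] at hmem
        left
        have := hXinj hmem
        omega
      | succ k =>
        have hmem : X n ∈ G.neighborSet (X (k + 1)) := hadj
        rw [hNX k] at hmem
        rcases Set.mem_insert_iff.mp hmem with h1 | h1
        · right
          rw [hXinj h1]
        · left
          have h2 : X n = X (k + 2) := h1
          rw [hXinj h2]
    · rintro ⟨hmn, h | h⟩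
      · rw [h]
        exact hadjX m
      · rw [h]
        exact (hadjX n).symm
  have iso1 : rayGraph ≃g G := {
    toEquiv := Equiv.ofBijective X ⟨hXinj, hXsurj⟩
    map_rel_iff' := by
      intro a b
      show G.Adj (X a) (X b) ↔ rayGraph.Adj a b
      rw [hadj_iff]
      simp only [rayGraph, SimpleGraph.fromRel_adj] }
  exact ⟨iso1.symm⟩

end helpers6

/-- a locally finite tree with finitely many leaves isomorphic to
T - x for some leaf x is a ray. -/
theorem stmt_1 {V : Type*} (G : SimpleGraph V) (hT : G.IsTree)
    (hlf : ∀ v, (G.neighborSet v).Finite)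
    (hfin : {x | IsLeaf G x}.Finite)
    (h : ∃ x, IsLeaf G x ∧ Nonempty (G ≃g G.induce {v | v ≠ x})) :
    Nonempty (G ≃g rayGraph) := by
  obtain ⟨x, hx, ⟨e⟩⟩ := h
  obtain ⟨y, hy⟩ := hx.exists_nbr
  have hc : G.Connected := hT.isConnected
  have huniq := leaves_eq_singleton hc hx hy hfin e
  exact ray_iso hc hx hy huniq e
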